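/- Let d > 0, set x = tanh(d/2), and let r ∈ ℝ be such that x cos r ≠ 1. Suppose real numbers s ≠ 0 and ψ satisfy (1 − s) sin r = s sin ψ and s² = x² + (1 − s)² − 2x(1 − s) cos r. Then sin ψ = sin r / (cosh d − sinh d · cos r). -/

import Mathlib

/-- From the Euclidean triangle construction in the Poincaré ball: if `d > 0`,
`x = tanh(d/2)`, `x cos r ≠ 1`, and real numbers `s ≠ 0` and `ψ` satisfy
`(1 − s) sin r = s sin ψ` and `s² = x² + (1 − s)² − 2x(1 − s) cos r`, then
`sin ψ = sin r / (cosh d − sinh d · cos r)`. -/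
theorem sin_psi_elimination (d : ℝ) (hd : 0 < d) (x : ℝ) (hx : x = Real.tanh (d / 2))
    (r : ℝ) (hxr : x * Real.cos r ≠ 1) (s ψ : ℝ) (hs : s ≠ 0)
    (h1 : (1 - s) * Real.sin r = s * Real.sin ψ)
    (h2 : s ^ 2 = x ^ 2 + (1 - s) ^ 2 - 2 * x * (1 - s) * Real.cos r) :
    Real.sin ψ = Real.sin r / (Real.cosh d - Real.sinh d * Real.cos r) := by
  set c := Real.cos r with hc
  set ch := Real.cosh (d / 2) with hch
  set sh := Real.sinh (d / 2) with hsh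
  have hchpos : 0 < ch := Real.cosh_pos _
  have hpyth : ch ^ 2 - sh ^ 2 = 1 := by
    have := Real.cosh_sq_sub_sinh_sq (d / 2); nlinarith [this]
  have hxe : x * ch = sh := by
    rw [hx, Real.tanh_eq_sinh_div_cosh]; field_simp
    rw [hch, hsh, mul_comm]
  have hxe2 : x ^ 2 * ch ^ 2 = sh ^ 2 := by rw [← hxe]; ring
  have h2d : 2 * (d / 2) = d := by ring
  have hC : Real.cosh d = ch ^ 2 + sh ^ 2 := by
    have h := Real.cosh_two_mul (d / 2)
    rw [h2d] at h
    exact h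
  have hS : Real.sinh d = 2 * sh * ch := by
    have h := Real.sinh_two_mul (d / 2)
    rw [h2d] at h
    linear_combination h
  have hchsq : ch ^ 2 * (1 - x ^ 2) = 1 := by linear_combination hpyth - hxe2
  have hx2 : (0 : ℝ) < 1 - x ^ 2 := by nlinarith [hchsq, sq_nonneg ch]
  have key : s * (2 - 2 * x * c) = 1 + x ^ 2 - 2 * x * c := by linear_combination h2
  have hxc : 1 - x * c ≠ 0 := fun h => hxr (by linarith [sub_eq_zero.mp h])
  have hD : 1 + x ^ 2 - 2 * x * c ≠ 0 := by
    intro h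
    apply hs
    have h0 : s * (2 * (1 - x * c)) = 0 := by
      rw [show s * (2 * (1 - x * c)) = s * (2 - 2 * x * c) by ring, key, h]
    rcases mul_eq_zero.mp h0 with h' | h'
    · exact h'
    · exact absurd h' (mul_ne_zero two_ne_zero hxc)
  have hE : (1 + x ^ 2 - 2 * x * c) * ch ^ 2 = ch ^ 2 + sh ^ 2 - 2 * sh * ch * c := by
    linear_combination hxe2 - 2 * c * ch * hxe
  have hden : Real.cosh d - Real.sinh d * c ≠ 0 := by
    rw [hC, hS]
    intro h
    apply hD
    have h0 : (1 + x ^ 2 - 2 * x * c) * ch ^ 2 = 0 := by rw [hE, h]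
    rcases mul_eq_zero.mp h0 with h' | h'
    · exact h'
    · exact absurd h' (by positivity)
  rw [eq_div_iff hden, hC, hS]
  have hsinψ : Real.sin ψ * (1 + x ^ 2 - 2 * x * c) = Real.sin r * (1 - x ^ 2) := by
    have e2 : Real.sin ψ * (s * (2 - 2 * x * c)) = (1 - s) * Real.sin r * (2 - 2 * x * c) := by
      rw [show Real.sin ψ * (s * (2 - 2 * x * c)) = s * Real.sin ψ * (2 - 2 * x * c) by ring,
        ← h1]
    have e3 : (1 - s) * (2 - 2 * x * c) = 1 - x ^ 2 := by linear_combination -h2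
    calc Real.sin ψ * (1 + x ^ 2 - 2 * x * c)
        = Real.sin ψ * (s * (2 - 2 * x * c)) := by rw [key]
      _ = (1 - s) * Real.sin r * (2 - 2 * x * c) := e2
      _ = Real.sin r * (1 - x ^ 2) := by linear_combination Real.sin r * e3
  linear_combination -Real.sin ψ * hE + ch ^ 2 * hsinψ + Real.sin r * hchsq
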